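/- Let T be a shortest path tree to destination t in an undirected nonnegatively edge-weighted graph G, and let uu' be an edge of T (u' the parent of u). Then for any edge vw ∉ T with v in the subtree T_u rooted at u and w not in T_u, minimizing d_G(u,v) + ℓ(vw) + d_G(w,t), one has d_{G−uu'}(u,t) = d_G(u,v) + ℓ(vw) + d_G(w,t). -/

import Mathlib

open scoped ENNReal

noncomputable section

/-- The length of a walk w.r.t. edge weights `ℓ`. -/
def wlen {V : Type*} {G : SimpleGraph V} (ℓ : Sym2 V → ℝ≥0∞) {u v : V} (p : G.Walk u v) : ℝ≥0∞ :=
  (p.edges.map ℓ).sum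

/-- Weighted shortest-path distance in `G`. -/
def wdist {V : Type*} (G : SimpleGraph V) (ℓ : Sym2 V → ℝ≥0∞) (u v : V) : ℝ≥0∞ :=
  ⨅ p : G.Walk u v, wlen ℓ p

/-- `s_u^{-e}`: the shortest `u`-`t` distance in `G` with edge `e` removed. -/
def sval {V : Type*} (G : SimpleGraph V) (ℓ : Sym2 V → ℝ≥0∞) (t : V) (e : Sym2 V) (u : V) :
    ℝ≥0∞ :=
  wdist (G.deleteEdges {e}) ℓ u t

/-- The supremum, over edges `uu'` of the walk (u nearer the start), of
`ℓ(P[v,u]) + s_u^{-uu'}`. -/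
def detourSup {V : Type*} (G : SimpleGraph V) (ℓ : Sym2 V → ℝ≥0∞) (t : V) :
    ∀ {v : V}, G.Walk v t → ℝ≥0∞
  | _, SimpleGraph.Walk.nil => 0
  | v, @SimpleGraph.Walk.cons _ _ _ w _ _h p =>
      max (sval G ℓ t s(v, w) v) (ℓ s(v, w) + detourSup G ℓ t p)

/-- The robust length `Val(P)` of a `v`-`t` walk `P`. -/
def rVal {V : Type*} (G : SimpleGraph V) (ℓ : Sym2 V → ℝ≥0∞) (t : V) {v : V}
    (p : G.Walk v t) : ℝ≥0∞ :=
  max (wlen ℓ p) (detourSup G ℓ t p)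

/-- The potential `y(v)`: minimum robust length over all simple `v`-`t` paths. -/
def pot {V : Type*} (G : SimpleGraph V) (ℓ : Sym2 V → ℝ≥0∞) (t v : V) : ℝ≥0∞ :=
  ⨅ p : {p : G.Walk v t // p.IsPath}, rVal G ℓ t p.1

set_option linter.unusedSectionVars false
set_option linter.unusedVariables false

open SimpleGraph

namespace RepPf

variable {V : Type*} [DecidableEq V] {G H : SimpleGraph V} (ℓ : Sym2 V → ℝ≥0∞)

@[simp] lemma wlen_nil {a : V} : wlen ℓ (Walk.nil : G.Walk a a) = 0 := by simp [wlen]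

@[simp] lemma wlen_cons {a b c : V} (h : G.Adj a b) (p : G.Walk b c) :
    wlen ℓ (Walk.cons h p) = ℓ s(a, b) + wlen ℓ p := by simp [wlen]

lemma wlen_append {a b c : V} (p : G.Walk a b) (q : G.Walk b c) :
    wlen ℓ (p.append q) = wlen ℓ p + wlen ℓ q := by
  simp [wlen, Walk.edges_append]

lemma wlen_reverse {a b : V} (p : G.Walk a b) : wlen ℓ p.reverse = wlen ℓ p := by
  simp [wlen, Walk.edges_reverse, List.map_reverse, List.sum_reverse]

lemma wlen_mapLe (hle : G ≤ H) {a b : V} (p : G.Walk a b) :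
    wlen ℓ (p.mapLe hle) = wlen ℓ p := by
  simp [wlen, Walk.mapLe, Walk.edges_map, Sym2.map_id', Function.comp_def]

lemma support_mapLe (hle : G ≤ H) {a b : V} (p : G.Walk a b) :
    (p.mapLe hle).support = p.support := by
  simp only [Walk.mapLe, Walk.support_map]
  exact List.map_id _

lemma wdist_le {a b : V} (p : G.Walk a b) : wdist G ℓ a b ≤ wlen ℓ p := iInf_le _ p

lemma wdist_le_of_le (hle : H ≤ G) (a b : V) : wdist G ℓ a b ≤ wdist H ℓ a b :=
  le_iInf fun p => (wdist_le ℓ (p.mapLe hle)).trans_eq (wlen_mapLe ℓ hle p)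

lemma wdist_triangle (a b c : V) :
    wdist G ℓ a c ≤ wdist G ℓ a b + wdist G ℓ b c := by
  have h1 : wdist G ℓ a b + wdist G ℓ b c
      = ⨅ p : G.Walk a b, ⨅ q : G.Walk b c, (wlen ℓ p + wlen ℓ q) := by
    rw [wdist, ENNReal.iInf_add]
    exact iInf_congr fun p => by rw [wdist, ENNReal.add_iInf]
  rw [h1]
  exact le_iInf fun p => le_iInf fun q =>
    (wdist_le ℓ (p.append q)).trans_eq (wlen_append ℓ p q)

lemma sum_map_le_of_sublist (f : Sym2 V → ℝ≥0∞) {l₁ l₂ : List (Sym2 V)} (h : l₁.Sublist l₂) :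
    (l₁.map f).sum ≤ (l₂.map f).sum := by
  induction h with
  | slnil => simp
  | cons a h ih => simpa using ih.trans (le_add_self)
  | cons_cons a h ih => simpa using add_le_add_right ih _

lemma wlen_bypass_le {a b : V} (p : G.Walk a b) : wlen ℓ p.bypass ≤ wlen ℓ p := by
  obtain ⟨l, hperm, hsub⟩ :=
    (p.bypass_isPath.edges_nodup).subperm (p.edges_bypass_subset)
  calc wlen ℓ p.bypass = (l.map ℓ).sum := by
        rw [wlen]; exact (List.Perm.sum_eq (hperm.map ℓ)).symm
    _ ≤ (p.edges.map ℓ).sum := sum_map_le_of_sublist ℓ hsub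
    _ = wlen ℓ p := rfl

lemma tree_wdist_eq {T : SimpleGraph V} (hT : T.IsTree) {a b : V}
    (p : T.Walk a b) (hp : p.IsPath) : wdist T ℓ a b = wlen ℓ p := by
  refine le_antisymm (wdist_le ℓ p) (le_iInf fun q => ?_)
  have hq : q.bypass = p := (hT.existsUnique_path a b).unique q.bypass_isPath hp
  calc wlen ℓ p = wlen ℓ q.bypass := by rw [hq]
    _ ≤ wlen ℓ q := wlen_bypass_le ℓ q

end RepPf

namespace RepPf

lemma lower_aux {V : Type*} [DecidableEq V] (G T : SimpleGraph V) (ℓ : Sym2 V → ℝ≥0∞) (t u : V)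
    (e : Sym2 V) (M : ℝ≥0∞)
    (hmin : ∀ a b : V, G.Adj a b → ¬ T.Adj a b →
      ¬ (T.deleteEdges {e}).Reachable a t → (T.deleteEdges {e}).Reachable b t →
      M ≤ wdist G ℓ u a + ℓ s(a, b) + wdist G ℓ b t) :
    ∀ {x z : V} (p : (G.deleteEdges {e}).Walk x z), z = t →
      ¬ (T.deleteEdges {e}).Reachable x t → M ≤ wdist G ℓ u x + wlen ℓ p := by
  intro x z p
  induction p with
  | nil => rintro rfl hx; exact absurd (SimpleGraph.Reachable.refl _) hx
  | @cons a b c h p ih =>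
    rintro rfl hx
    have hGab : G.Adj a b ∧ s(a, b) ∉ ({e} : Set (Sym2 V)) := by
      rw [SimpleGraph.deleteEdges_adj] at h; exact h
    by_cases hb : (T.deleteEdges {e}).Reachable b c
    · have hnTab : ¬ T.Adj a b := by
        intro hTab
        have hTeab : (T.deleteEdges {e}).Adj a b := by
          rw [SimpleGraph.deleteEdges_adj]; exact ⟨hTab, hGab.2⟩
        exact hx (hTeab.reachable.trans hb)
      calc M ≤ wdist G ℓ u a + ℓ s(a, b) + wdist G ℓ b c :=
            hmin a b hGab.1 hnTab hx hb
        _ ≤ wdist G ℓ u a + ℓ s(a, b) + wlen ℓ p := by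
            gcongr
            exact (wdist_le_of_le ℓ (SimpleGraph.deleteEdges_le _) b c).trans (wdist_le ℓ p)
        _ = wdist G ℓ u a + wlen ℓ (SimpleGraph.Walk.cons h p) := by
            rw [wlen_cons, add_assoc]
    · calc M ≤ wdist G ℓ u b + wlen ℓ p := ih rfl hb
        _ ≤ (wdist G ℓ u a + ℓ s(a, b)) + wlen ℓ p := by
            gcongr
            refine (wdist_triangle ℓ u a b).trans ?_
            gcongr
            simpa using wdist_le ℓ (SimpleGraph.Walk.cons hGab.1 .nil)
        _ = wdist G ℓ u a + wlen ℓ (SimpleGraph.Walk.cons h p) := by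
            rw [wlen_cons, add_assoc]

lemma key_aux {V : Type*} [DecidableEq V] (T : SimpleGraph V) (t u u' : V)
    (hparent : (T.deleteEdges {s(u, u')}).Reachable u' t) :
    ∀ {x z : V} (p : T.Walk x z),
      ((T.deleteEdges {s(u, u')}).Reachable z u ∨ (T.deleteEdges {s(u, u')}).Reachable z t) →
      ((T.deleteEdges {s(u, u')}).Reachable x u ∨ (T.deleteEdges {s(u, u')}).Reachable x t) := by
  intro x z p
  induction p with
  | nil => exact id
  | @cons a b c h p ih =>
    intro hz
    by_cases hab : s(a, b) = s(u, u')
    · rw [Sym2.eq_iff] at hab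
      rcases hab with ⟨rfl, rfl⟩ | ⟨rfl, rfl⟩
      · exact Or.inl (SimpleGraph.Reachable.refl _)
      · exact Or.inr hparent
    · have hTeab : (T.deleteEdges {s(u, u')}).Adj a b := by
        rw [SimpleGraph.deleteEdges_adj]; exact ⟨h, by simpa using hab⟩
      rcases ih hz with h1 | h1
      · exact Or.inl (hTeab.reachable.trans h1)
      · exact Or.inr (hTeab.reachable.trans h1)

end RepPf


open RepPf

/-- Let `T` be a shortest path tree to `t` in `G`, `uu'` a tree edge
with `u'` the parent of `u` (so removing `uu'` from `T` disconnects `u` from `t`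
but not `u'`). A vertex `x` belongs to the subtree `T_u` iff `x` cannot reach `t`
in `T − uu'`. If `vw` is a non-tree edge with `v ∈ T_u`, `w ∉ T_u`, minimizing
`d_G(u,v) + ℓ(vw) + d_G(w,t)` among all such edges, then
`d_{G−uu'}(u,t) = d_G(u,v) + ℓ(vw) + d_G(w,t)`. -/
theorem replacement_dist_eq_min_detour {V : Type*} [Fintype V] [DecidableEq V]
    (G T : SimpleGraph V) (ℓ : Sym2 V → ℝ≥0∞) (t : V)
    (hTG : T ≤ G) (hT : T.IsTree)
    (hspt : ∀ x : V, wdist T ℓ x t = wdist G ℓ x t)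
    (u u' : V) (huu' : T.Adj u u')
    (hchild : ¬ (T.deleteEdges {s(u, u')}).Reachable u t)
    (hparent : (T.deleteEdges {s(u, u')}).Reachable u' t)
    (v w : V) (hvw : G.Adj v w) (hnt : ¬ T.Adj v w)
    (hvin : ¬ (T.deleteEdges {s(u, u')}).Reachable v t)
    (hwout : (T.deleteEdges {s(u, u')}).Reachable w t)
    (hmin : ∀ v' w' : V, G.Adj v' w' → ¬ T.Adj v' w' →
      ¬ (T.deleteEdges {s(u, u')}).Reachable v' t →
      (T.deleteEdges {s(u, u')}).Reachable w' t →
      wdist G ℓ u v + ℓ s(v, w) + wdist G ℓ w t ≤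
        wdist G ℓ u v' + ℓ s(v', w') + wdist G ℓ w' t)
    (hconn : (G.deleteEdges {s(u, u')}).Reachable u t) :
    wdist (G.deleteEdges {s(u, u')}) ℓ u t =
      wdist G ℓ u v + ℓ s(v, w) + wdist G ℓ w t := by
  classical
  set e : Sym2 V := s(u, u') with he
  set Te := T.deleteEdges {e} with hTe
  set Ge := G.deleteEdges {e} with hGe
  set M := wdist G ℓ u v + ℓ s(v, w) + wdist G ℓ w t with hM
  have hTeT : Te ≤ T := SimpleGraph.deleteEdges_le _
  have hGeG : Ge ≤ G := SimpleGraph.deleteEdges_le _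
  have hTeGe : Te ≤ Ge := by
    intro a b hab
    rw [hTe, SimpleGraph.deleteEdges_adj] at hab
    rw [hGe, SimpleGraph.deleteEdges_adj]
    exact ⟨hTG hab.1, hab.2⟩
  -- the edge vw survives deletion
  have hvw_ne : s(v, w) ≠ e := by
    intro hvwe
    rw [he, Sym2.eq_iff] at hvwe
    rcases hvwe with ⟨rfl, rfl⟩ | ⟨rfl, rfl⟩
    · exact hnt huu'
    · exact hnt huu'.symm
  have hGevw : Ge.Adj v w := by
    rw [hGe, SimpleGraph.deleteEdges_adj]; exact ⟨hvw, by simpa using hvw_ne⟩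
  -- LOWER BOUND --------------------------------------------------------------
  have lower : M ≤ wdist Ge ℓ u t := by
    refine le_iInf fun p => ?_
    have h0 : wdist G ℓ u u = 0 := by
      refine le_antisymm ?_ zero_le
      simpa using wdist_le ℓ (SimpleGraph.Walk.nil : G.Walk u u)
    have := lower_aux G T ℓ t u e M hmin p rfl hchild
    rwa [h0, zero_add] at this
  -- UPPER BOUND --------------------------------------------------------------
  have hvu : Te.Reachable v u := by
    rcases key_aux T t u u' hparent ((hT.isConnected.preconnected v u).some)
        (Or.inl (SimpleGraph.Reachable.refl u)) with h1 | h1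
    · exact h1
    · exact absurd h1 hvin
  obtain ⟨rv⟩ := hvu
  obtain ⟨su'⟩ := hparent
  set r : Te.Walk v u := rv.bypass with hr
  set s0 : Te.Walk u' t := su'.bypass with hs0
  have hr_path : r.IsPath := rv.bypass_isPath
  have hs0_path : s0.IsPath := su'.bypass_isPath
  -- supports: r inside, s0 outside
  have hr_inside : ∀ z ∈ r.support, ¬ Te.Reachable z t := by
    intro z hz hzt
    exact hchild ((SimpleGraph.Walk.dropUntil r z hz).reachable.symm.trans hzt)
  have hs0_outside : ∀ z ∈ s0.support, Te.Reachable z t := by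
    intro z hz
    exact (SimpleGraph.Walk.dropUntil s0 z hz).reachable
  -- the tree path from u to t
  have hu_not_s0 : u ∉ s0.support := fun hu => hchild (hs0_outside u hu)
  set pT : T.Walk u t := SimpleGraph.Walk.cons huu' (s0.mapLe hTeT) with hpT
  have hpT_path : pT.IsPath := by
    rw [hpT, SimpleGraph.Walk.cons_isPath_iff]
    refine ⟨hs0_path.mapLe _, ?_⟩
    rw [support_mapLe]
    exact hu_not_s0
  have hpT_len : wdist G ℓ u t = wlen ℓ pT := by
    rw [← hspt u]; exact tree_wdist_eq ℓ hT pT hpT_path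
  -- the tree path from v to t
  set pv : T.Walk v t := (r.mapLe hTeT).append pT with hpv
  have hpv_path : pv.IsPath := by
    rw [SimpleGraph.Walk.isPath_def, hpv, SimpleGraph.Walk.support_append]
    have htail : pT.support.tail = (s0.mapLe hTeT).support := by
      rw [hpT, SimpleGraph.Walk.support_cons, List.tail_cons]
    rw [htail, support_mapLe, support_mapLe]
    refine List.Nodup.append (hr_path.support_nodup) (hs0_path.support_nodup) ?_
    intro z hz1 hz2
    exact hr_inside z hz1 (hs0_outside z hz2)
  have hpv_len : wdist G ℓ v t = wlen ℓ r + wlen ℓ pT := by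
    rw [← hspt v, tree_wdist_eq ℓ hT pv hpv_path, hpv, wlen_append, wlen_mapLe]
  -- B1 : wdist Ge w t ≤ wdist G w t
  have B1 : wdist Ge ℓ w t ≤ wdist G ℓ w t := by
    obtain ⟨sw⟩ := hwout
    have hswp : sw.bypass.IsPath := sw.bypass_isPath
    calc wdist Ge ℓ w t ≤ wlen ℓ (sw.bypass.mapLe hTeGe) := wdist_le ℓ _
      _ = wlen ℓ (sw.bypass.mapLe hTeT) := by rw [wlen_mapLe, wlen_mapLe]
      _ = wdist T ℓ w t := (tree_wdist_eq ℓ hT _ (hswp.mapLe _)).symm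
      _ = wdist G ℓ w t := hspt w
  by_cases hMtop : M = ⊤
  · rw [hMtop] at lower ⊢
    exact top_le_iff.mp lower
  -- finite case
  have hut_fin : wdist G ℓ u t ≠ ⊤ := by
    intro htop
    apply hMtop
    refine top_le_iff.mp ?_
    rw [← htop, hM]
    calc wdist G ℓ u t ≤ wdist G ℓ u v + wdist G ℓ v t := wdist_triangle ℓ u v t
      _ ≤ wdist G ℓ u v + (wdist G ℓ v w + wdist G ℓ w t) := by
          gcongr; exact wdist_triangle ℓ v w t
      _ ≤ wdist G ℓ u v + (ℓ s(v, w) + wdist G ℓ w t) := by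
          gcongr
          simpa using wdist_le ℓ (SimpleGraph.Walk.cons hvw .nil)
      _ = wdist G ℓ u v + ℓ s(v, w) + wdist G ℓ w t := by rw [add_assoc]
  have hpT_fin : wlen ℓ pT ≠ ⊤ := by rw [← hpT_len]; exact hut_fin
  -- B2 : wdist Ge u v ≤ wdist G u v
  have hrle : wlen ℓ r ≤ wdist G ℓ u v := by
    refine le_iInf fun q => ?_
    have hcand : wdist G ℓ v t ≤ wlen ℓ q + wlen ℓ pT := by
      calc wdist G ℓ v t ≤ wlen ℓ (q.reverse.append (pT.mapLe hTG)) := wdist_le ℓ _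
        _ = wlen ℓ q + wlen ℓ pT := by rw [wlen_append, wlen_reverse, wlen_mapLe]
    rw [hpv_len] at hcand
    exact (ENNReal.add_le_add_iff_right hpT_fin).mp hcand
  have B2 : wdist Ge ℓ u v ≤ wdist G ℓ u v := by
    refine le_trans ?_ hrle
    calc wdist Ge ℓ u v ≤ wlen ℓ ((r.mapLe hTeGe).reverse) := wdist_le ℓ _
      _ = wlen ℓ r := by rw [wlen_reverse, wlen_mapLe]
  -- assemble upper bound
  have upper : wdist Ge ℓ u t ≤ M := by
    calc wdist Ge ℓ u t ≤ wdist Ge ℓ u v + wdist Ge ℓ v t := wdist_triangle ℓ u v t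
      _ ≤ wdist Ge ℓ u v + (wdist Ge ℓ v w + wdist Ge ℓ w t) := by
          gcongr; exact wdist_triangle ℓ v w t
      _ ≤ wdist G ℓ u v + (ℓ s(v, w) + wdist G ℓ w t) := by
          refine add_le_add B2 (add_le_add ?_ B1)
          simpa using wdist_le ℓ (SimpleGraph.Walk.cons hGevw .nil)
      _ = M := by rw [hM, add_assoc]
  exact le_antisymm upper lower
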